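/- Let k ≥ 2 and N ≥ 1 and let {F_x}_{x ∈ [k]^N} be events (not necessarily disjoint) in a probability space with P(⋃_{x ∈ [k]^N} F_x) = 1. For x ∈ [k]^N let I_x = {y ∈ [k]^N : ∃ i ∈ [N], y_i = x_i}. Then there exists x* ∈ [k]^N with P(⋃_{y ∈ I_{x*}} F_y) ≥ 1 - (1 - 1/k)^N. -/

import Mathlib

open MeasureTheory

/-- Let `{F_x}_{x ∈ [k]^N}` be events (not necessarily disjoint) with
`P(⋃_x F_x) = 1`. Then there is `x*` with `P(⋃_{y ∈ I_{x*}} F_y) ≥ 1 - (1 - 1/k)^N`, where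
`I_x` is the set of tuples agreeing with `x` in at least one coordinate. -/
theorem exists_agreeing_union_prob_ge {Ω : Type} [MeasurableSpace Ω]
    (μ : Measure Ω) [IsProbabilityMeasure μ] (k N : ℕ) (hk : 2 ≤ k) (hN : 1 ≤ N)
    (F : (Fin N → Fin k) → Set Ω) (hF : ∀ x, MeasurableSet (F x))
    (h : μ (⋃ x : Fin N → Fin k, F x) = 1) :
    ∃ x : Fin N → Fin k,
      1 - (1 - 1 / (k : ENNReal)) ^ N ≤
        μ (⋃ y ∈ {y : Fin N → Fin k | ∃ i, y i = x i}, F y) := by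
  classical
  have hk0 : (k : ENNReal) ≠ 0 := by
    simp; omega
  set M := Fintype.card (Fin N → Fin k) with hM
  set e := Fintype.equivFin (Fin N → Fin k) with he
  set G : ℕ → Set Ω := fun n => if h : n < M then F (e.symm ⟨n, h⟩) else ∅ with hG
  have hGmeas : ∀ n, MeasurableSet (G n) := by
    intro n
    by_cases hn : n < M <;> simp [hG, hn, hF]
  have hGFx : ∀ x, G (e x) = F x := by
    intro x
    simp [hG, (e x).isLt, Fin.eta]
    exact fun hc => absurd (e x).isLt (not_lt.mpr hc)
  have hGunion : (⋃ n, G n) = ⋃ x, F x := by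
    apply Set.Subset.antisymm
    · refine Set.iUnion_subset fun n => ?_
      by_cases hn : n < M
      · simp only [hG, dif_pos hn]
        exact Set.subset_iUnion F _
      · simp [hG, hn]
    · refine Set.iUnion_subset fun x => ?_
      have : F x = G (e x) := (hGFx x).symm
      rw [this]
      exact Set.subset_iUnion G _
  set E : (Fin N → Fin k) → Set Ω := fun x => disjointed G (e x) with hE
  have hEmeas : ∀ x, MeasurableSet (E x) := fun x => MeasurableSet.disjointed hGmeas _
  have hEsub : ∀ x, E x ⊆ F x := by
    intro x
    have := disjointed_subset G (e x)
    rwa [hGFx x] at this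
  have hEdisj : Pairwise (Function.onFun Disjoint E) := by
    intro x y hxy
    exact disjoint_disjointed G (fun hc => hxy (e.injective (Fin.val_injective hc)))
  -- total sum of E is 1
  have hsumE : ∑ x, μ (E x) = 1 := by
    have h1 : μ (⋃ n, disjointed G n) = ∑' n, μ (disjointed G n) :=
      measure_iUnion (disjoint_disjointed G) (MeasurableSet.disjointed hGmeas)
    have h2 : (⋃ n, disjointed G n) = ⋃ x, F x := by rw [iUnion_disjointed, hGunion]
    have h3 : ∑' n, μ (disjointed G n) = ∑ n ∈ Finset.range M, μ (disjointed G n) := by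
      refine tsum_eq_sum fun n hn => ?_
      have hn' : ¬ n < M := by simpa using hn
      have : disjointed G n ⊆ G n := disjointed_subset G n
      rw [show G n = ∅ by simp [hG, hn']] at this
      simp [Set.subset_empty_iff.mp this]
    have h4 : ∑ n ∈ Finset.range M, μ (disjointed G n) = ∑ j : Fin M, μ (disjointed G j) :=
      (Fin.sum_univ_eq_sum_range (fun n => μ (disjointed G n)) M).symm
    have h5 : ∑ j : Fin M, μ (disjointed G (j : ℕ)) = ∑ x, μ (E x) :=
      (Equiv.sum_comp e (fun j : Fin M => μ (disjointed G (j : ℕ)))).symm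
    rw [← h5, ← h4, ← h3, ← h1, h2, h]
  -- counting: for each y, the number of x missing y is (k-1)^N
  have hcard : ∀ y : Fin N → Fin k,
      (Finset.univ.filter (fun x : Fin N → Fin k => ¬ ∃ i, y i = x i)).card = (k - 1) ^ N := by
    intro y
    have : (Finset.univ.filter (fun x : Fin N → Fin k => ¬ ∃ i, y i = x i)) =
        Fintype.piFinset (fun i => ({y i}ᶜ : Finset (Fin k))) := by
      ext x
      simp [Fintype.mem_piFinset, eq_comm, not_exists]
    rw [this, Fintype.card_piFinset]
    simp [Finset.card_compl]
  -- averaging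
  set s : (Fin N → Fin k) → ENNReal :=
    fun x => ∑ y ∈ Finset.univ.filter (fun y : Fin N → Fin k => ¬ ∃ i, y i = x i), μ (E y)
    with hs
  have hsum_s : ∑ x, s x = ((k - 1 : ℕ) : ENNReal) ^ N := by
    rw [hs]
    rw [Finset.sum_comm' (s := Finset.univ)
      (t := fun x => Finset.univ.filter (fun y : Fin N → Fin k => ¬ ∃ i, y i = x i))
      (t' := Finset.univ)
      (s' := fun y => Finset.univ.filter (fun x : Fin N → Fin k => ¬ ∃ i, y i = x i))
      (fun x y => by simp)]
    have : ∀ y : Fin N → Fin k,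
        ∑ x ∈ Finset.univ.filter (fun x : Fin N → Fin k => ¬ ∃ i, y i = x i), μ (E y)
          = ((k - 1 : ℕ) : ENNReal) ^ N * μ (E y) := by
      intro y
      rw [Finset.sum_const, hcard y, nsmul_eq_mul]
      push_cast
      ring
    rw [Finset.sum_congr rfl (fun y _ => this y), ← Finset.mul_sum, hsumE, mul_one]
  -- pick minimizer
  haveI : Nonempty (Fin k) := ⟨⟨0, by omega⟩⟩
  obtain ⟨x₀, -, hx₀⟩ := Finset.exists_min_image (Finset.univ : Finset (Fin N → Fin k)) s
    ⟨Classical.arbitrary _, Finset.mem_univ _⟩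
  have hcardι : (Finset.univ : Finset (Fin N → Fin k)).card = k ^ N := by
    simp [Finset.card_univ]
  have hx₀le : s x₀ ≤ ((k - 1 : ℕ) : ENNReal) ^ N / (k : ENNReal) ^ N := by
    rw [ENNReal.le_div_iff_mul_le (Or.inl (by positivity)) (Or.inl (by
      exact ENNReal.pow_ne_top (ENNReal.natCast_ne_top k)))]
    calc s x₀ * (k : ENNReal) ^ N = ∑ _x : Fin N → Fin k, s x₀ := by
          rw [Finset.sum_const, hcardι, nsmul_eq_mul, mul_comm]
          push_cast
          ring
      _ ≤ ∑ x, s x := Finset.sum_le_sum fun x _ => hx₀ x (Finset.mem_univ x)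
      _ = ((k - 1 : ℕ) : ENNReal) ^ N := hsum_s
  -- identify (1 - 1/k)^N with (k-1)^N / k^N
  have hone : (1 : ENNReal) - 1 / (k : ENNReal) = ((k - 1 : ℕ) : ENNReal) / (k : ENNReal) := by
    have hb : (1 : ENNReal) / (k : ENNReal) ≠ ⊤ := by
      simp [ENNReal.div_eq_top, hk0]
    refine ENNReal.sub_eq_of_eq_add hb ?_
    rw [ENNReal.div_add_div_same]
    have : ((k - 1 : ℕ) : ENNReal) + 1 = (k : ENNReal) := by
      have : (k - 1) + 1 = k := by omega
      exact_mod_cast congrArg (Nat.cast : ℕ → ENNReal) this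
    rw [this, ENNReal.div_self hk0 (ENNReal.natCast_ne_top k)]
  have hpow : (1 - 1 / (k : ENNReal)) ^ N = ((k - 1 : ℕ) : ENNReal) ^ N / (k : ENNReal) ^ N := by
    rw [hone, div_eq_mul_inv, mul_pow, ← ENNReal.inv_pow, ← div_eq_mul_inv]
  refine ⟨x₀, ?_⟩
  -- compute lower bound on the union measure
  set Ifin := Finset.univ.filter (fun y : Fin N → Fin k => ∃ i, y i = x₀ i) with hIfin
  have hsplit : ∑ y ∈ Ifin, μ (E y) + s x₀ = 1 := by
    rw [hIfin, hs]
    rw [Finset.sum_filter_add_sum_filter_not]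
    exact hsumE
  have hmeasE : μ (⋃ y ∈ Ifin, E y) = ∑ y ∈ Ifin, μ (E y) :=
    measure_biUnion_finset (fun a _ b _ hab => hEdisj hab) (fun b _ => hEmeas b)
  have hsubU : (⋃ y ∈ Ifin, E y) ⊆ ⋃ y ∈ {y : Fin N → Fin k | ∃ i, y i = x₀ i}, F y := by
    refine Set.iUnion₂_subset fun y hy => ?_
    have hy' : y ∈ {y : Fin N → Fin k | ∃ i, y i = x₀ i} := by
      simpa [hIfin] using hy
    exact (hEsub y).trans (Set.subset_biUnion_of_mem hy')
  calc 1 - (1 - 1 / (k : ENNReal)) ^ N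
      ≤ 1 - s x₀ := by
        refine tsub_le_tsub_left ?_ 1
        rw [hpow]; exact hx₀le
    _ ≤ ∑ y ∈ Ifin, μ (E y) := by
        rw [tsub_le_iff_right, hsplit]
    _ = μ (⋃ y ∈ Ifin, E y) := hmeasE.symm
    _ ≤ μ (⋃ y ∈ {y : Fin N → Fin k | ∃ i, y i = x₀ i}, F y) := measure_mono hsubU
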